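/- For every integer x ≥ 1, G⁻¹(x) = ∑_{d=1}^{x} λ(d) · C_Ω(d) · M(⌊x/d⌋). -/

import Mathlib

/-- `C_Ω(n) = Ω(n)! / (α₁! ⋯ α_r!)` is the multinomial coefficient of the exponents in the
prime factorization `n = p₁^{α₁} ⋯ p_r^{α_r}`; by convention `C_Ω(1) = 1`. -/
noncomputable def COmega (n : ℕ) : ℝ :=
  ((ArithmeticFunction.cardFactors n).factorial : ℝ) /
    ∏ p ∈ n.primeFactors, ((n.factorization p).factorial : ℝ)

open ArithmeticFunction Finset
open scoped ArithmeticFunction.Omega ArithmeticFunction.omega ArithmeticFunction.Moebius ArithmeticFunction.zeta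

namespace Stmt12Aux

/-- `Ω n` as sum of exponents. -/
lemma cardFactors_eq_sum (n : ℕ) :
    Ω n = ∑ p ∈ n.primeFactors, n.factorization p := by
  rw [cardFactors_apply]
  have : n.primeFactors = (n.primeFactorsList : Multiset ℕ).toFinset := rfl
  rw [this]
  have := Multiset.toFinset_sum_count_eq (n.primeFactorsList : Multiset ℕ)
  simp only [Multiset.coe_count, Multiset.coe_card] at this
  rw [← this]
  exact Finset.sum_congr rfl fun p _ => Nat.primeFactorsList_count_eq

lemma prod_factorial_subset {m : ℕ} {S : Finset ℕ} (hS : m.primeFactors ⊆ S) :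
    ∏ q ∈ S, ((m.factorization q).factorial : ℝ)
      = ∏ q ∈ m.primeFactors, ((m.factorization q).factorial : ℝ) := by
  refine (Finset.prod_subset hS fun q _ hq => ?_).symm
  have : m.factorization q = 0 := by
    rw [← Nat.support_factorization] at hq
    exact Finsupp.notMem_support_iff.mp hq
  simp [this]

lemma prod_factorial_ne_zero (n : ℕ) :
    (∏ q ∈ n.primeFactors, ((n.factorization q).factorial : ℝ)) ≠ 0 :=
  Finset.prod_ne_zero_iff.mpr fun q _ => by
    exact_mod_cast (Nat.factorial_pos _).ne'

/-- The multinomial recurrence. -/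
lemma COmega_rec {n : ℕ} (hn : 2 ≤ n) :
    COmega n = ∑ p ∈ n.primeFactors, COmega (n / p) := by
  have hn0 : n ≠ 0 := by omega
  set D : ℝ := ∏ q ∈ n.primeFactors, ((n.factorization q).factorial : ℝ) with hD
  have hD0 : D ≠ 0 := prod_factorial_ne_zero n
  have hΩpos : 1 ≤ Ω n := by
    obtain ⟨p, hpp, hpd⟩ := Nat.exists_prime_and_dvd (show n ≠ 1 by omega)
    have hp : p ∈ n.primeFactors := Nat.mem_primeFactors.mpr ⟨hpp, hpd, hn0⟩
    have h1 : 1 ≤ n.factorization p := hpp.factorization_pos_of_dvd hn0 hpd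
    calc 1 ≤ n.factorization p := h1
    _ ≤ ∑ q ∈ n.primeFactors, n.factorization q :=
        Finset.single_le_sum (fun q _ => Nat.zero_le _) hp
    _ = Ω n := (cardFactors_eq_sum n).symm
  -- for each prime p ∣ n, COmega (n/p) = (Ω n - 1)! * α_p / D
  have key : ∀ p ∈ n.primeFactors,
      COmega (n / p) = ((Ω n - 1).factorial : ℝ) * (n.factorization p : ℝ) / D := by
    intro p hp
    obtain ⟨hpp, hpd, -⟩ := Nat.mem_primeFactors.mp hp
    obtain ⟨m, hm⟩ := hpd
    have hm0 : m ≠ 0 := by rintro rfl; simp at hm; omega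
    have hmn : n / p = m := by rw [hm]; exact Nat.mul_div_cancel_left m hpp.pos
    have hΩm : Ω m = Ω n - 1 := by
      rw [hm, cardFactors_mul hpp.ne_zero hm0, cardFactors_apply_prime hpp]; omega
    have hfac : ∀ q, m.factorization q
        = n.factorization q - (if q = p then 1 else 0) := by
      intro q
      rw [hm, Nat.factorization_mul hpp.ne_zero hm0, hpp.factorization]
      simp [Finsupp.single_apply]
      rcases eq_or_ne q p with rfl | hq
      · simp
      · simp [hq, Ne.symm hq]
    have hαpos : 1 ≤ n.factorization p := (Nat.Prime.factorization_pos_of_dvd hpp hn0 ⟨m, hm⟩)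
    have hsub : m.primeFactors ⊆ n.primeFactors :=
      Nat.primeFactors_mono ⟨p, by rw [hm]; ring⟩ hn0
    have hprod : ∏ q ∈ n.primeFactors, ((m.factorization q).factorial : ℝ)
        = ((n.factorization p - 1).factorial : ℝ)
          * ∏ q ∈ n.primeFactors.erase p, ((n.factorization q).factorial : ℝ) := by
      rw [← Finset.mul_prod_erase _ _ hp, hfac p]
      simp only [if_pos rfl]
      congr 1
      refine Finset.prod_congr rfl fun q hq => ?_
      rw [hfac q, if_neg (Finset.ne_of_mem_erase hq)]
      simp
    have hDsplit : D = ((n.factorization p).factorial : ℝ)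
        * ∏ q ∈ n.primeFactors.erase p, ((n.factorization q).factorial : ℝ) := by
      rw [hD, ← Finset.mul_prod_erase _ _ hp]
    have hpe : ∏ q ∈ n.primeFactors.erase p, ((n.factorization q).factorial : ℝ) ≠ 0 :=
      Finset.prod_ne_zero_iff.mpr fun q _ => by exact_mod_cast (Nat.factorial_pos _).ne'
    have hfact : ((n.factorization p).factorial : ℝ)
        = (n.factorization p : ℝ) * ((n.factorization p - 1).factorial : ℝ) := by
      obtain ⟨k, hk⟩ : ∃ k, n.factorization p = k + 1 := ⟨n.factorization p - 1, by omega⟩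
      rw [hk, Nat.factorial_succ]
      push_cast
      ring
    rw [hmn, COmega, ← prod_factorial_subset hsub, hprod, hΩm, hDsplit, hfact]
    have h1 : ((n.factorization p - 1).factorial : ℝ) ≠ 0 := by
      exact_mod_cast (Nat.factorial_pos _).ne'
    field_simp
  rw [Finset.sum_congr rfl key]
  rw [← Finset.sum_div, ← Finset.mul_sum]
  have hsum : ∑ p ∈ n.primeFactors, (n.factorization p : ℝ) = (Ω n : ℝ) := by
    rw [cardFactors_eq_sum n]; push_cast; ring
  rw [hsum, COmega]
  have hfac2 : ((Ω n).factorial : ℝ) = ((Ω n - 1).factorial : ℝ) * (Ω n : ℝ) := by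
    obtain ⟨K, hK⟩ : ∃ K, Ω n = K + 1 := ⟨Ω n - 1, by omega⟩
    rw [hK, Nat.factorial_succ]
    push_cast
    ring
  rw [hfac2]


/-- `F n = (-1)^(Ω n) * C_Ω(n)` as an arithmetic function. -/
noncomputable def F : ArithmeticFunction ℝ :=
  ⟨fun n => if n = 0 then 0 else (-1 : ℝ) ^ (Ω n) * COmega n, by simp⟩

lemma F_apply {n : ℕ} (hn : n ≠ 0) : F n = (-1 : ℝ) ^ (Ω n) * COmega n := if_neg hn

/-- `T = ε + (prime indicator)`. -/
def T : ArithmeticFunction ℝ :=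
  ⟨fun n => if n = 1 then 1 else if n.Prime then 1 else 0, by norm_num⟩

lemma T_apply (n : ℕ) : T n = if n = 1 then 1 else if n.Prime then 1 else 0 := rfl

lemma divisors_filter_prime (n : ℕ) (hn : n ≠ 0) :
    n.divisors.filter Nat.Prime = n.primeFactors := by
  ext p
  simp only [Finset.mem_filter, Nat.mem_divisors, Nat.mem_primeFactors]
  tauto

lemma sum_T_term (n : ℕ) (hn : n ≠ 0) (f : ℕ → ℝ) :
    ∑ d ∈ n.divisors, T d * f d
      = f 1 + ∑ p ∈ n.primeFactors, f p := by
  have h1 : (1 : ℕ) ∈ n.divisors := Nat.one_mem_divisors.mpr hn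
  have : ∀ d ∈ n.divisors, T d * f d
      = (if d = 1 then f d else 0) + (if d.Prime then f d else 0) := by
    intro d _
    rw [T_apply]
    rcases eq_or_ne d 1 with rfl | hd
    · simp [Nat.not_prime_one]
    · simp only [if_neg hd]
      by_cases hdp : d.Prime <;> simp [hdp]
  rw [Finset.sum_congr rfl this, Finset.sum_add_distrib]
  congr 1
  · rw [Finset.sum_ite_eq' _ _ f, if_pos h1]
  · rw [← Finset.sum_filter, divisors_filter_prime n hn]

lemma T_mul_F : T * F = 1 := by
  ext n
  rcases eq_or_ne n 0 with rfl | hn0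
  · simp
  rw [mul_apply, Nat.sum_divisorsAntidiagonal (fun d e => T d * F e),
    sum_T_term n hn0 (fun d => F (n / d))]
  rcases eq_or_ne n 1 with rfl | hn1
  · simp [F_apply, COmega]
  have hn2 : 2 ≤ n := by omega
  have hΩpos : 1 ≤ Ω n := by
    obtain ⟨p, hpp, hpd⟩ := Nat.exists_prime_and_dvd hn1
    have hp : p ∈ n.primeFactors := Nat.mem_primeFactors.mpr ⟨hpp, hpd, hn0⟩
    calc 1 ≤ n.factorization p := hpp.factorization_pos_of_dvd hn0 hpd
    _ ≤ ∑ q ∈ n.primeFactors, n.factorization q :=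
        Finset.single_le_sum (fun q _ => Nat.zero_le _) hp
    _ = Ω n := (cardFactors_eq_sum n).symm
  rw [Nat.div_one, F_apply hn0]
  have hterm : ∀ p ∈ n.primeFactors,
      F (n / p) = (-1 : ℝ) ^ (Ω n - 1) * COmega (n / p) := by
    intro p hp
    obtain ⟨hpp, hpd, -⟩ := Nat.mem_primeFactors.mp hp
    obtain ⟨m, hm⟩ := hpd
    have hm0 : m ≠ 0 := by rintro rfl; simp at hm; omega
    have hmn : n / p = m := by rw [hm]; exact Nat.mul_div_cancel_left m hpp.pos
    have hΩm : Ω m = Ω n - 1 := by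
      rw [hm, cardFactors_mul hpp.ne_zero hm0, cardFactors_apply_prime hpp]; omega
    rw [hmn, F_apply hm0, hΩm]
  rw [Finset.sum_congr rfl hterm, ← Finset.mul_sum, ← COmega_rec hn2]
  obtain ⟨K, hK⟩ : ∃ K, Ω n = K + 1 := ⟨Ω n - 1, by omega⟩
  rw [hK, show (1 : ArithmeticFunction ℝ) n = 0 by rw [one_apply]; exact if_neg hn1]
  simp only [Nat.add_sub_cancel]
  ring

/-- `g = T * ζ`. -/
lemma g_eq (g : ArithmeticFunction ℝ)
    (hg : ∀ n : ℕ, 0 < n → g n = (ArithmeticFunction.cardDistinctFactors n : ℝ) + 1) :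
    g = T * (ζ : ArithmeticFunction ℕ) := by
  ext n
  rcases eq_or_ne n 0 with rfl | hn0
  · simp
  rw [hg n (Nat.pos_of_ne_zero hn0), mul_apply,
    Nat.sum_divisorsAntidiagonal (fun d e => T d * ((ζ : ArithmeticFunction ℕ) : ArithmeticFunction ℝ) e)]
  have hz : ∀ d ∈ n.divisors, T d * ((ζ : ArithmeticFunction ℕ) : ArithmeticFunction ℝ) (n / d)
      = T d * 1 := by
    intro d hd
    obtain ⟨hdvd, -⟩ := Nat.mem_divisors.mp hd
    have hd0 : d ≠ 0 := (Nat.pos_of_mem_divisors hd).ne'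
    have : n / d ≠ 0 := Nat.div_ne_zero_iff.mpr ⟨hd0, Nat.le_of_dvd (Nat.pos_of_ne_zero hn0) hdvd⟩
    simp [natCoe_apply, ArithmeticFunction.zeta_apply, this]
  rw [Finset.sum_congr rfl hz, sum_T_term n hn0 (fun _ => (1 : ℝ))]
  have hcard : n.primeFactors.card = ω n := by
    rw [cardDistinctFactors_apply]
    exact List.card_toFinset _
  rw [Finset.sum_const, Nat.smul_one_eq_cast, hcard]
  ring

/-- Hyperbola-type summation. -/
lemma sum_Icc_mul (f h : ArithmeticFunction ℝ) (x : ℕ) :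
    ∑ n ∈ Finset.Icc 1 x, (f * h) n
      = ∑ d ∈ Finset.Icc 1 x, f d * ∑ e ∈ Finset.Icc 1 (x / d), h e := by
  simp only [mul_apply, Finset.mul_sum]
  rw [Finset.sum_sigma' (Finset.Icc 1 x) (fun n => n.divisorsAntidiagonal)
    (fun n p => f p.1 * h p.2),
    Finset.sum_sigma' (Finset.Icc 1 x) (fun d => Finset.Icc 1 (x / d))
    (fun d e => f d * h e)]
  refine Finset.sum_nbij' (fun p => ⟨p.2.1, p.2.2⟩) (fun p => ⟨p.1 * p.2, (p.1, p.2)⟩)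
    ?_ ?_ ?_ ?_ ?_
  · rintro ⟨n, d, e⟩ hp
    simp only [Finset.mem_sigma, Finset.mem_Icc, Nat.mem_divisorsAntidiagonal] at hp ⊢
    obtain ⟨⟨hn1, hnx⟩, hde, -⟩ := hp
    have hd0 : 0 < d := by
      rcases Nat.eq_zero_or_pos d with rfl | h
      · simp at hde; omega
      · exact h
    have he0 : 0 < e := by
      rcases Nat.eq_zero_or_pos e with rfl | h
      · simp at hde; omega
      · exact h
    refine ⟨⟨hd0, ?_⟩, he0, ?_⟩
    · calc d ≤ d * e := Nat.le_mul_of_pos_right d he0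
      _ = n := hde
      _ ≤ x := hnx
    · rw [Nat.le_div_iff_mul_le hd0, mul_comm]
      omega
  · rintro ⟨d, e⟩ hp
    simp only [Finset.mem_sigma, Finset.mem_Icc] at hp
    obtain ⟨⟨hd1, hdx⟩, he1, hex⟩ := hp
    have hde : d * e ≤ x := by
      rw [Nat.le_div_iff_mul_le (by omega)] at hex
      rw [mul_comm]; exact hex
    refine Finset.mem_sigma.mpr ⟨Finset.mem_Icc.mpr ⟨?_, hde⟩,
      Nat.mem_divisorsAntidiagonal.mpr ⟨rfl, ?_⟩⟩
    · exact Nat.one_le_iff_ne_zero.mpr (by positivity)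
    · positivity
  · rintro ⟨n, d, e⟩ hp
    simp only [Finset.mem_sigma, Nat.mem_divisorsAntidiagonal] at hp
    obtain ⟨-, hde, -⟩ := hp
    simp [hde]
  · rintro ⟨d, e⟩ _
    rfl
  · rintro ⟨n, d, e⟩ _
    rfl

end Stmt12Aux


open Stmt12Aux

/-- Let `g` be the arithmetic function with `g(n) = ω(n) + 1` for `n ≥ 1`,
let `ginv` be its Dirichlet inverse (characterized by `g * ginv = 1`), and let
`G⁻¹(x) = ∑_{n ≤ x} ginv(n)`.  Then for every `x ≥ 1`,
`G⁻¹(x) = ∑_{d=1}^{x} λ(d) · C_Ω(d) · M(⌊x/d⌋)`, where `λ(d) = (−1)^{Ω(d)}` is the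
Liouville function and `M` is the Mertens function. -/
theorem stmt_12 (g ginv : ArithmeticFunction ℝ)
    (hg : ∀ n : ℕ, 0 < n → g n = (ArithmeticFunction.cardDistinctFactors n : ℝ) + 1)
    (hginv : g * ginv = 1) (x : ℕ) (hx : 1 ≤ x) :
    (∑ n ∈ Finset.Icc 1 x, ginv n) =
      ∑ d ∈ Finset.Icc 1 x,
        (-1 : ℝ) ^ (ArithmeticFunction.cardFactors d) * COmega d *
          ∑ n ∈ Finset.Icc 1 (x / d), (ArithmeticFunction.moebius n : ℝ) := by
  have h1 : g * (((μ : ArithmeticFunction ℤ) : ArithmeticFunction ℝ) * F) = 1 := by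
    rw [g_eq g hg, mul_assoc, ← mul_assoc ((ζ : ArithmeticFunction ℕ) : ArithmeticFunction ℝ),
      coe_zeta_mul_coe_moebius, one_mul, T_mul_F]
  have hginv2 : ginv = ((μ : ArithmeticFunction ℤ) : ArithmeticFunction ℝ) * F := by
    calc ginv = 1 * ginv := (one_mul _).symm
    _ = ((((μ : ArithmeticFunction ℤ) : ArithmeticFunction ℝ) * F) * g) * ginv := by
        rw [mul_comm _ g, h1]
    _ = (((μ : ArithmeticFunction ℤ) : ArithmeticFunction ℝ) * F) * (g * ginv) :=
        mul_assoc _ _ _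
    _ = ((μ : ArithmeticFunction ℤ) : ArithmeticFunction ℝ) * F := by rw [hginv, mul_one]
  rw [hginv2, mul_comm, sum_Icc_mul]
  refine Finset.sum_congr rfl fun d hd => ?_
  have hd0 : d ≠ 0 := by
    simp only [Finset.mem_Icc] at hd; omega
  rw [F_apply hd0]
  congr 1
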